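/- Suppose F satisfies (F1)–(F2) and the estimator η satisfies (A1). Let (uⁿ)_{n≥0} ⊂ Y be the iterative linearization sequence restricted to Y, and suppose for some n ≥ 1 that ‖uⁿ − uⁿ⁻¹‖_X ≤ λ η(uⁿ) with 0 < λ < 1/C₅, where C₅ := C₃ C₁ and C₃ := 1 + β/ν. Then ‖u*_Y − uⁿ‖_X ≤ λ C₃ min{ η(uⁿ), (1 − λ C₅)⁻¹ η(u*_Y) }. -/

import Mathlib

set_option autoImplicit false

/-- If the linearization error is small, `‖uⁿ − uⁿ⁻¹‖ ≤ λ η(uⁿ)` with `0 < λ < 1/C₅`,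
then `‖u*_Y − uⁿ‖ ≤ λ C₃ min{η(uⁿ), (1 − λC₅)⁻¹ η(u*_Y)}`. -/
theorem stmt_9
    {X : Type*} [NormedAddCommGroup X] [InnerProductSpace ℝ X] [CompleteSpace X]
    (F : X → X →L[ℝ] ℝ) (L ν : ℝ) (hL : 0 < L) (hν : 0 < ν)
    (hF1 : ∀ u v w : X, |F u w - F v w| ≤ L * ‖u - v‖ * ‖w‖)
    (hF2 : ∀ u v : X, ν * ‖u - v‖ ^ 2 ≤ F u (u - v) - F v (u - v))
    (a : X → X →ₗ[ℝ] X →ₗ[ℝ] ℝ) (α β : ℝ) (hα : 0 < α) (hβ : 0 < β)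
    (hcoer : ∀ u v : X, α * ‖v‖ ^ 2 ≤ a u v v)
    (hbdd : ∀ u v w : X, a u v w ≤ β * ‖v‖ * ‖w‖)
    (Y : Submodule ℝ X) (hYclosed : IsClosed (Y : Set X))
    (ustarY : X) (hustarY_mem : ustarY ∈ Y) (hustarY : ∀ v ∈ Y, F ustarY v = 0)
    (u : ℕ → X) (humem : ∀ n : ℕ, u n ∈ Y)
    (hiter : ∀ n : ℕ, ∀ w ∈ Y, a (u n) (u (n + 1)) w = a (u n) (u n) w - F (u n) w)
    (η : X → ℝ) (C₁ : ℝ) (hC₁ : 1 ≤ C₁)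
    (hηnonneg : ∀ v ∈ Y, 0 ≤ η v)
    (hA1 : ∀ v ∈ Y, ∀ w ∈ Y, |η v - η w| ≤ C₁ * ‖v - w‖)
    (C₃ C₅ : ℝ) (hC₃ : C₃ = 1 + β / ν) (hC₅ : C₅ = C₃ * C₁)
    (lam : ℝ) (hlam : 0 < lam) (hlam' : lam < 1 / C₅)
    (n : ℕ) (hn : 1 ≤ n)
    (hlin : ‖u n - u (n - 1)‖ ≤ lam * η (u n)) :
    ‖ustarY - u n‖ ≤ lam * C₃ * min (η (u n)) ((1 - lam * C₅)⁻¹ * η ustarY) := by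

  -- setup
  set m := n - 1 with hm
  have hmn : m + 1 = n := Nat.succ_pred_eq_of_pos hn
  set d := u n - u m with hd
  set e := ustarY - u m with he
  have heY : e ∈ Y := Y.sub_mem hustarY_mem (humem m)
  have hdY : d ∈ Y := Y.sub_mem (humem n) (humem m)
  have hC₃pos : 0 < C₃ := by
    rw [hC₃]; positivity
  have hC₅pos : 0 < C₅ := by
    rw [hC₅]; positivity
  have hlamC₅ : lam * C₅ < 1 := by
    exact (lt_div_iff₀ hC₅pos).mp hlam'
  -- Step A : ν ‖e‖² ≤ β ‖d‖ ‖e‖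
  have hstar : F ustarY e = 0 := hustarY e heY
  have h2 : ν * ‖e‖ ^ 2 ≤ - F (u m) e := by
    have := hF2 ustarY (u m)
    rw [← he, hstar] at this
    linarith
  have hiter' : a (u m) (u n) e = a (u m) (u m) e - F (u m) e := by
    have := hiter m e heY
    rwa [hmn] at this
  have hAe : (- F (u m)) e = a (u m) d e := by
    simp only [hd, map_sub, LinearMap.sub_apply]
    simp only [ContinuousLinearMap.neg_apply]
    linarith
  have hA : ν * ‖e‖ ^ 2 ≤ β * ‖d‖ * ‖e‖ := by
    have hb := hbdd (u m) d e
    have : - F (u m) e = a (u m) d e := by simpa using hAe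
    linarith
  -- Step B : ν ‖e‖ ≤ β ‖d‖
  have hB : ν * ‖e‖ ≤ β * ‖d‖ := by
    rcases eq_or_lt_of_le (norm_nonneg e) with h0 | h0
    · rw [← h0]; nlinarith [norm_nonneg d]
    · have := (mul_le_mul_iff_of_pos_right h0).mp (by nlinarith : ν * ‖e‖ * ‖e‖ ≤ β * ‖d‖ * ‖e‖)
      exact this
  have heC : ‖e‖ ≤ β / ν * ‖d‖ := by
    rw [div_mul_eq_mul_div, le_div_iff₀ hν]
    nlinarith
  -- Step C : ‖ustarY - u n‖ ≤ C₃ ‖d‖ ≤ C₃ lam η(u n)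
  have htri : ‖ustarY - u n‖ ≤ ‖e‖ + ‖d‖ := by
    have : ustarY - u n = e - d := by rw [he, hd]; abel
    rw [this]; exact norm_sub_le e d
  have hηn : 0 ≤ η (u n) := hηnonneg (u n) (humem n)
  have hC : ‖ustarY - u n‖ ≤ lam * C₃ * η (u n) := by
    have h1 : ‖ustarY - u n‖ ≤ C₃ * ‖d‖ := by rw [hC₃]; nlinarith
    calc ‖ustarY - u n‖ ≤ C₃ * ‖d‖ := h1
      _ ≤ C₃ * (lam * η (u n)) := by
          exact mul_le_mul_of_nonneg_left hlin hC₃pos.le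
      _ = lam * C₃ * η (u n) := by ring
  -- Step D : η(u n) ≤ (1 - lam C₅)⁻¹ η(ustarY)
  have hD : η (u n) ≤ (1 - lam * C₅)⁻¹ * η ustarY := by
    have habs := hA1 (u n) (humem n) ustarY hustarY_mem
    have hns : ‖u n - ustarY‖ = ‖ustarY - u n‖ := norm_sub_rev _ _
    have h3 : η (u n) - η ustarY ≤ C₁ * (lam * C₃ * η (u n)) := by
      have h4 : η (u n) - η ustarY ≤ C₁ * ‖ustarY - u n‖ := by
        have := abs_le.mp habs
        rw [hns] at this
        linarith [this.2]
      have := mul_le_mul_of_nonneg_left hC (by linarith : (0:ℝ) ≤ C₁)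
      linarith
    rw [le_inv_mul_iff₀ (by linarith : (0:ℝ) < 1 - lam * C₅)]
    have : C₁ * (lam * C₃ * η (u n)) = lam * C₅ * η (u n) := by rw [hC₅]; ring
    rw [this] at h3
    linarith
  rw [min_eq_left hD]
  exact hC
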